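/- Let d = 2, b > a ≥ 1, 0 < l ≤ b, and suppose a + l > b. Then: (i) if b² − 4al < 0 then h(T_{M(a,b;l)}) > log b; (ii) if b² − 4al > 0 and b² − 2al − 2a² < 0 then h(T_{M(a,b;l)}) > log b; (iii) if b² − 4al > 0 and b² − 2al − 2a² ≥ 0 then h(T_{M(a,b;l)}) = log b; (iv) if b² − 4al = 0 and a ≤ l then h(T_{M(a,b;l)}) = log b; (v) if b² − 4al = 0 and a > l then h(T_{M(a,b;l)}) > log b. -/

import Mathlib

open Filter Real

/-- `treeP d M n i` = number of `n`-blocks of the hom Markov tree-shift `T_M`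
on the `d`-tree whose root label is `i`. -/
def treeP (d : ℕ) {ι : Type} [Fintype ι] (M : Matrix ι ι ℕ) : ℕ → ι → ℕ
  | 0, _ => 1
  | n + 1, i => (∑ j, M i j * treeP d M n j) ^ d

/-- `|Δ_n| = 1 + d + ⋯ + d^n`. -/
def deltaCard (d n : ℕ) : ℕ := ∑ i ∈ Finset.range (n + 1), d ^ i

/-- Topological entropy of the hom Markov tree-shift `T_M` on the `d`-tree. -/
noncomputable def treeEntropy (d : ℕ) {ι : Type} [Fintype ι] (M : Matrix ι ι ℕ) : ℝ :=
  Filter.limsup (fun n => Real.log (∑ i, treeP d M n i) / (deltaCard d n : ℝ)) Filter.atTop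

/-- `M` has entries in `{0,1}`. -/
def IsBinary {ι : Type} [Fintype ι] (M : Matrix ι ι ℕ) : Prop := ∀ i j, M i j ≤ 1

/-- `M` is irreducible. -/
def MatIrreducible {ι : Type} [Fintype ι] [DecidableEq ι] (M : Matrix ι ι ℕ) : Prop :=
  ∀ i j, ∃ n, 1 ≤ n ∧ 0 < (M ^ n) i j

/-- `M` is the block matrix `[[E_a, R],[O, E_b]]` with `R` binary of constant row sum `l`. -/
def IsMabl (a b l : ℕ) (M : Matrix (Fin (a + b)) (Fin (a + b)) ℕ) : Prop :=
  (∀ i j, M i j ≤ 1) ∧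
  (∀ i j : Fin (a + b), (i : ℕ) < a → (j : ℕ) < a → M i j = 1) ∧
  (∀ i j : Fin (a + b), a ≤ (i : ℕ) → a ≤ (j : ℕ) → M i j = 1) ∧
  (∀ i j : Fin (a + b), a ≤ (i : ℕ) → (j : ℕ) < a → M i j = 0) ∧
  (∀ i : Fin (a + b), (i : ℕ) < a → (∑ j : Fin (a + b), if a ≤ (j : ℕ) then M i j else 0) = l)


def qq (b n : ℕ) : ℕ := b ^ (2^(n+1) - 2)
def rr (a b l : ℕ) : ℕ → ℕ
  | 0 => 1
  | n+1 => (a * rr a b l n + l * qq b n)^2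

lemma qq_succ (b n : ℕ) : qq b (n+1) = b^2 * (qq b n)^2 := by
  have h2n : 2 ≤ 2^(n+1) := by
    have : (1:ℕ) ≤ 2^n := Nat.one_le_two_pow
    calc 2 = 2*1 := by ring
    _ ≤ 2*2^n := by omega
    _ = 2^(n+1) := by ring
  rw [qq, qq, ← pow_mul, ← pow_add]
  congr 1
  have : 2^(n+1+1) = 2 * 2^(n+1) := by ring
  omega

lemma qq_pos {b : ℕ} (hb : 0 < b) (n : ℕ) : 0 < qq b n := Nat.pow_pos hb

lemma rr_pos {a b l : ℕ} (ha : 0 < a) (n : ℕ) : 0 < rr a b l n := by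
  induction n with
  | zero => exact Nat.one_pos
  | succ n ih => exact pow_pos (by positivity) 2

noncomputable def XX (a b l : ℕ) (n : ℕ) : ℝ := (rr a b l n : ℝ) / (qq b n : ℝ)

lemma XX_zero (a b l : ℕ) : XX a b l 0 = 1 := by simp [XX, rr, qq]

lemma XX_succ {a b l : ℕ} (hb : 0 < b) (n : ℕ) :
    XX a b l (n+1) = ((a * XX a b l n + l)/b)^2 := by
  have hq : (0:ℝ) < (qq b n : ℝ) := by exact_mod_cast qq_pos hb n
  have hb' : (0:ℝ) < (b:ℝ) := by exact_mod_cast hb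
  rw [XX, XX, qq_succ]
  show ((((a * rr a b l n + l * qq b n)^2 : ℕ)):ℝ) / ((b^2 * (qq b n)^2 : ℕ):ℝ) = _
  push_cast
  have h : ((a:ℝ) * ((rr a b l n : ℝ)/(qq b n : ℝ)) + l)/b
      = ((a * rr a b l n + l * qq b n : ℝ))/((b : ℝ)*(qq b n :ℝ)) := by
    field_simp
  rw [h, div_pow, mul_pow]

lemma rr_eq_XX_mul {a b l : ℕ} (hb : 0 < b) (n : ℕ) :
    (rr a b l n : ℝ) = XX a b l n * (qq b n : ℝ) := by
  have hq : (0:ℝ) < (qq b n : ℝ) := by exact_mod_cast qq_pos hb n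
  rw [XX, div_mul_cancel₀]
  exact ne_of_gt hq

lemma deltaCard_two (n : ℕ) : deltaCard 2 n = 2^(n+1) - 1 := by
  induction n with
  | zero => rfl
  | succ n ih =>
    have h1 : (1:ℕ) ≤ 2^(n+1) := Nat.one_le_two_pow
    rw [deltaCard, Finset.sum_range_succ, ← deltaCard, ih]
    ring_nf
    omega

lemma treeP_eq {a b l : ℕ} (ha : 1 ≤ a) (hab : a < b)
    (M : Matrix (Fin (a + b)) (Fin (a + b)) ℕ) (hM : IsMabl a b l M) (n : ℕ) (i : Fin (a+b)) :
    treeP 2 M n i = if (i:ℕ) < a then rr a b l n else qq b n := by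
  obtain ⟨hbin, hE1, hE2, hO, hR⟩ := hM
  have hb : 0 < b := by omega
  have cardlt : (Finset.univ.filter (fun j : Fin (a+b) => (j:ℕ) < a)).card = a := by
    have : (Finset.univ.filter (fun j : Fin (a+b) => (j:ℕ) < a)) = Finset.Iio (⟨a, by omega⟩ : Fin (a+b)) := by
      ext j; simp [Fin.lt_def]
    rw [this, Fin.card_Iio]
  have cardge : (Finset.univ.filter (fun j : Fin (a+b) => a ≤ (j:ℕ))).card = b := by
    have : (Finset.univ.filter (fun j : Fin (a+b) => a ≤ (j:ℕ))) = Finset.Ici (⟨a, by omega⟩ : Fin (a+b)) := by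
      ext j; simp [Fin.le_def]
    rw [this, Fin.card_Ici]; simp
  induction n generalizing i with
  | zero => simp [treeP, rr, qq]
  | succ n ih =>
    have hsum : (∑ j, M i j * treeP 2 M n j)
        = ∑ j : Fin (a+b), (if (j:ℕ) < a then M i j * rr a b l n else M i j * qq b n) := by
      apply Finset.sum_congr rfl
      intro j _
      rw [ih j]
      split <;> rfl
    show (∑ j : Fin (a+b), M i j * treeP 2 M n j)^2 = _
    rw [hsum, Finset.sum_ite]
    by_cases hia : (i:ℕ) < a
    · have h1 : ∑ j ∈ Finset.univ.filter (fun j : Fin (a+b) => (j:ℕ) < a), M i j * rr a b l n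
          = a * rr a b l n := by
        rw [← Finset.sum_mul]
        congr 1
        have : ∑ j ∈ Finset.univ.filter (fun j : Fin (a+b) => (j:ℕ) < a), M i j
            = ∑ _j ∈ Finset.univ.filter (fun j : Fin (a+b) => (j:ℕ) < a), 1 :=
          Finset.sum_congr rfl (fun j hj => hE1 i j hia (Finset.mem_filter.mp hj).2)
        rw [this, Finset.sum_const, smul_eq_mul, mul_one, cardlt]
      have h2 : ∑ j ∈ Finset.univ.filter (fun j : Fin (a+b) => ¬ (j:ℕ) < a), M i j * qq b n
          = l * qq b n := by
        rw [← Finset.sum_mul]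
        congr 1
        rw [← hR i hia, Finset.sum_ite, Finset.sum_const_zero, add_zero]
        apply Finset.sum_congr
        · ext j; simp [not_lt]
        · intros; rfl
      rw [h1, h2]
      simp only [hia, if_true]
      rfl
    · have h1 : ∑ j ∈ Finset.univ.filter (fun j : Fin (a+b) => (j:ℕ) < a), M i j * rr a b l n = 0 := by
        apply Finset.sum_eq_zero
        intro j hj
        rw [hO i j (not_lt.mp hia) (Finset.mem_filter.mp hj).2, zero_mul]
      have h2 : ∑ j ∈ Finset.univ.filter (fun j : Fin (a+b) => ¬ (j:ℕ) < a), M i j * qq b n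
          = b * qq b n := by
        rw [← Finset.sum_mul]
        congr 1
        have : ∑ j ∈ Finset.univ.filter (fun j : Fin (a+b) => ¬ (j:ℕ) < a), M i j
            = ∑ _j ∈ Finset.univ.filter (fun j : Fin (a+b) => ¬ (j:ℕ) < a), 1 :=
          Finset.sum_congr rfl (fun j hj => hE2 i j (not_lt.mp hia) (not_lt.mp (Finset.mem_filter.mp hj).2))
        have hset : Finset.univ.filter (fun j : Fin (a+b) => ¬ (j:ℕ) < a)
            = Finset.univ.filter (fun j : Fin (a+b) => a ≤ (j:ℕ)) := by
          ext j; simp [not_lt]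
        rw [this, Finset.sum_const, smul_eq_mul, mul_one, hset, cardge]
      rw [h1, h2, zero_add]
      simp only [hia, if_false]
      show (b * qq b n)^2 = qq b (n+1)
      have h2n : 2 ≤ 2^(n+1) := by
        have := Nat.one_le_two_pow (n := n+1); omega
      rw [qq, qq, mul_pow, ← pow_mul, ← pow_add]
      congr 1
      have : 2^(n+1+1) = 2 * 2^(n+1) := by ring
      omega


lemma card_filter_lt {a b : ℕ} (hb : 0 < b) :
    (Finset.univ.filter (fun j : Fin (a+b) => (j:ℕ) < a)).card = a := by
  have : (Finset.univ.filter (fun j : Fin (a+b) => (j:ℕ) < a))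
      = Finset.Iio (⟨a, by omega⟩ : Fin (a+b)) := by
    ext j; simp [Fin.lt_def]
  rw [this, Fin.card_Iio]

lemma card_filter_ge {a b : ℕ} (hb : 0 < b) :
    (Finset.univ.filter (fun j : Fin (a+b) => ¬ (j:ℕ) < a)).card = b := by
  have : (Finset.univ.filter (fun j : Fin (a+b) => ¬ (j:ℕ) < a))
      = Finset.Ici (⟨a, by omega⟩ : Fin (a+b)) := by
    ext j; simp [Fin.le_def, not_lt]
  rw [this, Fin.card_Ici]; simp

lemma sum_treeP {a b l : ℕ} (ha : 1 ≤ a) (hab : a < b)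
    (M : Matrix (Fin (a + b)) (Fin (a + b)) ℕ) (hM : IsMabl a b l M) (n : ℕ) :
    (∑ i, treeP 2 M n i) = a * rr a b l n + b * qq b n := by
  have hb : 0 < b := by omega
  calc (∑ i, treeP 2 M n i)
      = ∑ i : Fin (a+b), (if (i:ℕ) < a then rr a b l n else qq b n) :=
        Finset.sum_congr rfl (fun i _ => treeP_eq ha hab M hM n i)
    _ = _ := by
        rw [Finset.sum_ite, Finset.sum_const, Finset.sum_const,
          card_filter_lt hb, card_filter_ge hb, smul_eq_mul, smul_eq_mul]

lemma two_le_pow (n : ℕ) : 2 ≤ 2^(n+1) := by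
  have : (1:ℕ) ≤ 2^n := Nat.one_le_two_pow
  calc (2:ℕ) = 2*1 := by ring
  _ ≤ 2*2^n := by omega
  _ = 2^(n+1) := by ring

lemma deltaCard_cast (n : ℕ) : ((deltaCard 2 n : ℕ) : ℝ) = 2^(n+1) - 1 := by
  rw [deltaCard_two]
  have := two_le_pow n
  push_cast [Nat.cast_sub (by omega : 1 ≤ 2^(n+1))]
  ring

lemma deltaCard_pos (n : ℕ) : (0:ℝ) < (deltaCard 2 n : ℝ) := by
  rw [deltaCard_cast]
  have : (2:ℝ) ≤ 2^(n+1) := by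
    exact_mod_cast Nat.cast_le.mpr (two_le_pow n)
  linarith

lemma log_qq {b : ℕ} (hb : 0 < b) (n : ℕ) :
    Real.log (qq b n : ℝ) = ((deltaCard 2 n : ℝ) - 1) * Real.log b := by
  have h1 : ((qq b n : ℕ) : ℝ) = (b:ℝ) ^ (2^(n+1) - 2 : ℕ) := by
    rw [qq]; push_cast; ring
  rw [h1, Real.log_pow]
  congr 1
  have := two_le_pow n
  rw [deltaCard_cast]
  push_cast [Nat.cast_sub (by omega : 2 ≤ 2^(n+1))]
  ring

lemma deltaCard_tendsto : Tendsto (fun n => ((deltaCard 2 n : ℕ) : ℝ)) atTop atTop := by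
  apply tendsto_natCast_atTop_atTop.comp
  apply tendsto_atTop_mono (fun n => ?_) tendsto_id
  rw [deltaCard_two]
  have : n + 1 < 2^(n+1) := Nat.lt_two_pow_self
  simp only [id]
  omega

lemma entropy_of_bounded {a b l : ℕ} (ha : 1 ≤ a) (hab : a < b) (hl : 0 < l)
    (M : Matrix (Fin (a + b)) (Fin (a + b)) ℕ) (hM : IsMabl a b l M)
    (X : ℝ) (hX1 : 1 ≤ X) (hXf : ((a:ℝ)*X+(l:ℝ))^2 ≤ (b:ℝ)^2*X) :
    treeEntropy 2 M = Real.log b := by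
  have hb : 0 < b := by omega
  have hb' : (0:ℝ) < b := by exact_mod_cast hb
  have ha' : (0:ℝ) < a := by exact_mod_cast ha
  have hl' : (0:ℝ) < l := by exact_mod_cast hl
  -- XX is bounded by X
  have hXX0 : ∀ n, 0 ≤ XX a b l n := fun n => by
    unfold XX; positivity
  have hXle : ∀ n, XX a b l n ≤ X := by
    intro n
    induction n with
    | zero => rw [XX_zero]; exact hX1
    | succ n ih =>
      rw [XX_succ hb, div_pow, div_le_iff₀ (by positivity)]
      have h0 := hXX0 n
      calc ((a:ℝ) * XX a b l n + l)^2 ≤ ((a:ℝ)*X+l)^2 := by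
            apply pow_le_pow_left₀ (by positivity)
            nlinarith
      _ ≤ (b:ℝ)^2 * X := hXf
      _ = X * (b:ℝ)^2 := by ring
  set S : ℕ → ℝ := fun n => ∑ i, (treeP 2 M n i : ℝ) with hSdef
  set f := fun n => Real.log (S n) / ((deltaCard 2 n : ℕ) : ℝ) with hf
  have hScast : ∀ n, S n = a * (rr a b l n : ℝ) + b * (qq b n : ℝ) := by
    intro n
    rw [hSdef]
    show ((∑ i, (treeP 2 M n i : ℝ))) = _
    rw [← Nat.cast_sum, sum_treeP ha hab M hM]
    push_cast; ring
  have hq' : ∀ n, (0:ℝ) < (qq b n : ℝ) := fun n => by exact_mod_cast qq_pos hb n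
  have hr' : ∀ n, (0:ℝ) < (rr a b l n : ℝ) := fun n => by exact_mod_cast rr_pos ha n
  have hSpos : ∀ n, (0:ℝ) < S n := by
    intro n; rw [hScast]; nlinarith [hr' n, hq' n]
  -- lower bound : log b ≤ f n
  have hlow : ∀ n, Real.log b ≤ f n := by
    intro n
    have hD := deltaCard_pos n
    rw [hf, le_div_iff₀ hD]
    have h1 : (b:ℝ) * (qq b n : ℝ) ≤ S n := by
      rw [hScast]; nlinarith [hr' n, hq' n]
    calc Real.log b * (deltaCard 2 n : ℝ)
        = Real.log b + ((deltaCard 2 n : ℝ) - 1) * Real.log b := by ring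
      _ = Real.log ((b:ℝ) * (qq b n : ℝ)) := by
          rw [Real.log_mul (ne_of_gt hb') (ne_of_gt (hq' n)), log_qq hb]
      _ ≤ Real.log _ := Real.log_le_log (mul_pos hb' (hq' n)) h1
  -- upper bound
  have hup : ∀ n, f n ≤ Real.log b + (Real.log ((a:ℝ)*X+b) - Real.log b) * ((deltaCard 2 n : ℕ) : ℝ)⁻¹ := by
    intro n
    have hD := deltaCard_pos n
    rw [hf]
    have h1 : S n ≤ ((a:ℝ)*X+b) * (qq b n : ℝ) := by
      rw [hScast]
      have h2 : (rr a b l n : ℝ) ≤ X * (qq b n : ℝ) := by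
        rw [rr_eq_XX_mul hb]
        exact mul_le_mul_of_nonneg_right (hXle n) (le_of_lt (hq' n))
      nlinarith [hq' n]
    have h3 : Real.log (S n) ≤
        Real.log ((a:ℝ)*X+b) + ((deltaCard 2 n : ℝ) - 1) * Real.log b := by
      calc Real.log _ ≤ Real.log (((a:ℝ)*X+b) * (qq b n : ℝ)) :=
            Real.log_le_log (hSpos n) h1
        _ = _ := by rw [Real.log_mul (by positivity) (ne_of_gt (hq' n)), log_qq hb]
    rw [div_le_iff₀ hD]
    have hlogb : 0 ≤ Real.log ((a:ℝ)*X+b) - Real.log b := by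
      have : (b:ℝ) ≤ (a:ℝ)*X+b := by nlinarith
      have := Real.log_le_log hb' this
      linarith
    have hD1 : (1:ℝ) ≤ (deltaCard 2 n : ℝ) := by
      have := deltaCard_pos n
      have h2 : (1:ℕ) ≤ deltaCard 2 n := by
        by_contra h; push_neg at h
        interval_cases (deltaCard 2 n) <;> simp_all
      exact_mod_cast h2
    calc Real.log (S n)
        ≤ Real.log ((a:ℝ)*X+b) + ((deltaCard 2 n : ℝ) - 1) * Real.log b := h3
      _ = Real.log b * (deltaCard 2 n : ℝ) + (Real.log ((a:ℝ)*X+b) - Real.log b) := by ring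
      _ ≤ (Real.log b + (Real.log ((a:ℝ)*X+b) - Real.log b) * ((deltaCard 2 n : ℕ) : ℝ)⁻¹) * (deltaCard 2 n : ℝ) := by
          rw [add_mul, mul_assoc, inv_mul_cancel₀ (ne_of_gt hD), mul_one]
  -- squeeze
  have hg : Tendsto (fun n => Real.log b + (Real.log ((a:ℝ)*X+b) - Real.log b) * ((deltaCard 2 n : ℕ) : ℝ)⁻¹)
      atTop (nhds (Real.log b)) := by
    have h0 : Tendsto (fun n => ((deltaCard 2 n : ℕ) : ℝ)⁻¹) atTop (nhds 0) :=
      deltaCard_tendsto.inv_tendsto_atTop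
    have := (h0.const_mul (Real.log ((a:ℝ)*X+b) - Real.log b)).const_add (Real.log b)
    simpa using this
  have hften : Tendsto f atTop (nhds (Real.log b)) :=
    tendsto_of_tendsto_of_tendsto_of_le_of_le tendsto_const_nhds hg hlow hup
  rw [treeEntropy]
  exact hften.limsup_eq

-- crude upper bound for boundedness of the limsup
lemma deltaCard_succ (n : ℕ) : deltaCard 2 (n+1) = 2 * deltaCard 2 n + 1 := by
  rw [deltaCard_two, deltaCard_two]
  have h1 := two_le_pow n
  have : 2^(n+1+1) = 2*2^(n+1) := by ring
  omega

lemma deltaCard_one_le (n : ℕ) : 1 ≤ deltaCard 2 n := by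
  rw [deltaCard_two]; have := two_le_pow n; omega

lemma rr_le {a b l : ℕ} (hab : a < b) (hlb : l ≤ b) (n : ℕ) :
    rr a b l n ≤ ((a+b)^2) ^ (deltaCard 2 n) := by
  set c := (a+b)^2 with hc
  induction n with
  | zero =>
    show 1 ≤ c ^ (deltaCard 2 0)
    exact Nat.one_le_pow _ _ (pow_pos (by omega) 2)
  | succ n ih =>
    show (a * rr a b l n + l * qq b n)^2 ≤ c ^ (deltaCard 2 (n+1))
    have hq : qq b n ≤ c ^ (deltaCard 2 n) := by
      calc qq b n = b ^ (2^(n+1)-2) := rfl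
      _ ≤ b ^ (deltaCard 2 n) :=
          Nat.pow_le_pow_right (by omega) (by rw [deltaCard_two]; omega)
      _ ≤ c ^ (deltaCard 2 n) := Nat.pow_le_pow_left
            (le_trans (Nat.le_add_left b a) (Nat.le_self_pow two_ne_zero _)) _
    calc (a * rr a b l n + l * qq b n)^2
        ≤ ((a+l) * c ^ (deltaCard 2 n))^2 := by
          apply Nat.pow_le_pow_left
          calc a * rr a b l n + l * qq b n
              ≤ a * c ^ (deltaCard 2 n) + l * c ^ (deltaCard 2 n) :=
                Nat.add_le_add (Nat.mul_le_mul_left a ih) (Nat.mul_le_mul_left l hq)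
            _ = (a+l) * c ^ (deltaCard 2 n) := by ring
      _ = (a+l)^2 * (c ^ (deltaCard 2 n))^2 := by ring
      _ ≤ c * (c ^ (deltaCard 2 n))^2 := by
          apply Nat.mul_le_mul_right
          rw [hc]; apply Nat.pow_le_pow_left; omega
      _ = c ^ (2 * deltaCard 2 n + 1) := by rw [← pow_mul, ← pow_succ']; ring_nf
      _ = c ^ (deltaCard 2 (n+1)) := by rw [deltaCard_succ]

lemma f_upper_bound {a b l : ℕ} (ha : 1 ≤ a) (hab : a < b) (hlb : l ≤ b)
    (M : Matrix (Fin (a + b)) (Fin (a + b)) ℕ) (hM : IsMabl a b l M) (n : ℕ) :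
    Real.log (∑ i, (treeP 2 M n i : ℝ)) / ((deltaCard 2 n : ℕ) : ℝ)
      ≤ 2 * Real.log (((a+b)^2 : ℕ) : ℝ) := by
  have hD := deltaCard_pos n
  have hb : 0 < b := by omega
  set c := (a+b)^2 with hc
  have hc1 : 1 ≤ c := Nat.one_le_pow _ _ (by omega)
  have hS : (∑ i, treeP 2 M n i) ≤ c ^ (2 * deltaCard 2 n) := by
    rw [sum_treeP ha hab M hM]
    have h1 := rr_le (l := l) hab hlb n
    have h2 : qq b n ≤ c ^ (deltaCard 2 n) := by
      calc qq b n = b ^ (2^(n+1)-2) := rfl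
      _ ≤ b ^ (deltaCard 2 n) :=
          Nat.pow_le_pow_right (by omega) (by rw [deltaCard_two]; omega)
      _ ≤ c ^ (deltaCard 2 n) := Nat.pow_le_pow_left
            (le_trans (Nat.le_add_left b a) (Nat.le_self_pow two_ne_zero _)) _
    calc a * rr a b l n + b * qq b n
        ≤ a * c ^ (deltaCard 2 n) + b * c ^ (deltaCard 2 n) :=
          Nat.add_le_add (Nat.mul_le_mul_left a h1) (Nat.mul_le_mul_left b h2)
      _ = (a+b) * c ^ (deltaCard 2 n) := by ring
      _ ≤ c ^ (1 + deltaCard 2 n) := by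
          rw [pow_add, pow_one]
          exact Nat.mul_le_mul_right _ (Nat.le_self_pow two_ne_zero _)
      _ ≤ c ^ (2 * deltaCard 2 n) := by
          apply Nat.pow_le_pow_right (by omega)
          have := deltaCard_one_le n
          omega
  rw [div_le_iff₀ hD]
  have hcast : (∑ i, (treeP 2 M n i : ℝ)) = ((∑ i, treeP 2 M n i : ℕ) : ℝ) := by push_cast; rfl
  have hSpos : (0:ℝ) < (∑ i, (treeP 2 M n i : ℝ)) := by
    rw [hcast, sum_treeP ha hab M hM]
    have h1 : (0:ℝ) < (rr a b l n : ℝ) := by exact_mod_cast rr_pos ha n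
    have h2 : (0:ℝ) < (qq b n : ℝ) := by exact_mod_cast qq_pos hb n
    have ha' : (0:ℝ) < (a:ℝ) := by exact_mod_cast ha
    push_cast
    nlinarith
  calc Real.log (∑ i, (treeP 2 M n i : ℝ))
      ≤ Real.log ((c:ℝ) ^ (2 * deltaCard 2 n)) := by
        apply Real.log_le_log hSpos
        rw [hcast]
        exact_mod_cast hS
    _ = (2 * deltaCard 2 n : ℕ) * Real.log (c:ℝ) := by rw [Real.log_pow]
    _ = 2 * Real.log ((c:ℕ) : ℝ) * ((deltaCard 2 n : ℕ):ℝ) := by push_cast; ring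


set_option maxHeartbeats 1000000 in
lemma entropy_gt {a b l : ℕ} (ha : 1 ≤ a) (hab : a < b) (hl : 0 < l) (hlb : l ≤ b)
    (M : Matrix (Fin (a + b)) (Fin (a + b)) ℕ) (hM : IsMabl a b l M)
    (δ : ℝ) (hδ : 0 < δ)
    (hstep : ∀ x : ℝ, 1 ≤ x → x + δ ≤ (((a:ℝ)*x+(l:ℝ))/(b:ℝ))^2) :
    Real.log b < treeEntropy 2 M := by
  have hb : 0 < b := by omega
  have hb' : (0:ℝ) < b := by exact_mod_cast hb
  have ha' : (0:ℝ) < a := by exact_mod_cast ha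
  have hab' : (a:ℝ) ≤ b := by exact_mod_cast le_of_lt hab
  have hl' : (0:ℝ) < l := by exact_mod_cast hl
  have hq' : ∀ n, (0:ℝ) < (qq b n : ℝ) := fun n => by exact_mod_cast qq_pos hb n
  have hXX0 : ∀ n, 0 ≤ XX a b l n := fun n => by unfold XX; positivity
  -- growth of XX
  have hgrow : ∀ n : ℕ, 1 + n * δ ≤ XX a b l n := by
    intro n
    induction n with
    | zero => rw [XX_zero]; simp
    | succ n ih =>
      have h1 : 1 ≤ XX a b l n := by
        have : (0:ℝ) ≤ (n:ℝ) * δ := by positivity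
        linarith
      rw [XX_succ hb]
      have h2 := hstep (XX a b l n) h1
      push_cast
      linarith
  -- reach K = 4 b^2/a^2
  obtain ⟨N, hN⟩ := exists_nat_ge ((4*(b:ℝ)^2/(a:ℝ)^2 - 1)/δ)
  have hK : 4*(b:ℝ)^2 ≤ (a:ℝ)^2 * XX a b l N := by
    have h1 : (4*(b:ℝ)^2/(a:ℝ)^2 - 1) ≤ N * δ := by
      rw [div_le_iff₀ hδ] at hN
      linarith
    have h2 : 4*(b:ℝ)^2/(a:ℝ)^2 ≤ XX a b l N := by linarith [hgrow N]
    rw [div_le_iff₀ (by positivity)] at h2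
    linarith
  -- doubling regime
  have key : ∀ m : ℕ, (4:ℝ)^(2^m) * (b:ℝ)^2 ≤ (a:ℝ)^2 * XX a b l (N+m) := by
    intro m
    induction m with
    | zero => simpa using hK
    | succ m ih =>
      have hx0 := hXX0 (N+m)
      have h2 : (4:ℝ)^(2^(m+1)) = ((4:ℝ)^(2^m))^2 := by
        rw [pow_succ 2 m, pow_mul]
      rw [show N+(m+1) = (N+m)+1 from rfl, XX_succ hb, div_pow,
        mul_div_assoc' , le_div_iff₀ (by positivity), h2]
      have hprod : ((4:ℝ)^(2^m) * (b:ℝ)^2) * ((4:ℝ)^(2^m) * (b:ℝ)^2)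
          ≤ ((a:ℝ)^2 * XX a b l (N+m)) * ((a:ℝ)^2 * XX a b l (N+m)) :=
        mul_le_mul ih ih (by positivity) (by nlinarith [pow_pos (show (0:ℝ) < 4 by norm_num) (2^m)])
      nlinarith [mul_nonneg (mul_nonneg (le_of_lt ha') hx0) (le_of_lt hl'),
        sq_nonneg ((a:ℝ) * XX a b l (N+m)), mul_pos ha' hl']
  -- lower bound on rr
  have hrr : ∀ m : ℕ, (4:ℝ)^(2^m) * (qq b (N+m) : ℝ) ≤ (rr a b l (N+m) : ℝ) := by
    intro m
    rw [rr_eq_XX_mul hb]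
    apply mul_le_mul_of_nonneg_right _ (le_of_lt (hq' (N+m)))
    have hba2 : (a:ℝ)^2 ≤ (b:ℝ)^2 := by nlinarith
    have h4p : (0:ℝ) < (4:ℝ)^(2^m) := pow_pos (by norm_num) _
    nlinarith [key m, mul_nonneg (le_of_lt h4p) (sub_nonneg.mpr hba2), mul_pos ha' ha',
      sq_nonneg ((a:ℝ))]
  -- the constant c
  set ε : ℝ := Real.log 4 / 2^(N+2) with hε
  set c : ℝ := Real.log b + ε with hc
  have hlog4 : (1:ℝ) ≤ Real.log 4 := by
    have h2 : (0.6931471803:ℝ) < Real.log 2 := Real.log_two_gt_d9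
    have h4 : (4:ℝ) = 2^2 := by norm_num
    rw [h4, Real.log_pow]
    push_cast
    linarith
  have hεpos : 0 < ε := by rw [hε]; positivity
  have hε2 : ε * (2:ℝ)^(N+2) = Real.log 4 := by
    rw [hε]; field_simp
  have hcgt : Real.log b < c := by rw [hc]; linarith
  -- eventual lower bound
  have hev : ∀ n, N + b + 1 ≤ n →
      c ≤ Real.log (∑ i, (treeP 2 M n i : ℝ)) / ((deltaCard 2 n : ℕ) : ℝ) := by
    intro n hn
    obtain ⟨k, rfl⟩ : ∃ k, n = N + (k + 1) := ⟨n - N - 1, by omega⟩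
    set m := k + 1 with hm
    have hkb : b ≤ k := by omega
    have hD := deltaCard_pos (N+m)
    have hcast : (∑ i, (treeP 2 M (N+m) i : ℝ)) = ((∑ i, treeP 2 M (N+m) i : ℕ) : ℝ) := by
      push_cast; rfl
    have hSpos : (0:ℝ) < (∑ i, (treeP 2 M (N+m) i : ℝ)) := by
      have h1 : (0:ℝ) < (rr a b l (N+m) : ℝ) := by exact_mod_cast rr_pos ha (N+m)
      rw [hcast, sum_treeP ha hab M hM]
      push_cast
      nlinarith [hq' (N+m)]
    have hlogS : (2:ℝ)^m * Real.log 4 + (((deltaCard 2 (N+m) : ℕ):ℝ) - 1) * Real.log b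
        ≤ Real.log (∑ i, (treeP 2 M (N+m) i : ℝ)) := by
      have h1 : (4:ℝ)^(2^m) * (qq b (N+m) : ℝ) ≤ (∑ i, (treeP 2 M (N+m) i : ℝ)) := by
        rw [hcast, sum_treeP ha hab M hM]
        push_cast
        have h2 := hrr m
        have h3 : (0:ℝ) < (rr a b l (N+m) : ℝ) := by exact_mod_cast rr_pos ha (N+m)
        have h4 : (1:ℝ) ≤ (a:ℝ) := by exact_mod_cast ha
        have h5 := mul_le_mul_of_nonneg_right h4 (le_of_lt h3)
        rw [one_mul] at h5
        have h6 : (0:ℝ) < (b:ℝ) * (qq b (N+m) : ℝ) := mul_pos hb' (hq' (N+m))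
        linarith
      calc (2:ℝ)^m * Real.log 4 + (((deltaCard 2 (N+m) : ℕ):ℝ) - 1) * Real.log b
          = Real.log ((4:ℝ)^(2^m) * (qq b (N+m) : ℝ)) := by
            rw [Real.log_mul (by positivity) (ne_of_gt (hq' (N+m))), Real.log_pow, log_qq hb]
            push_cast
            ring
        _ ≤ _ := Real.log_le_log (mul_pos (pow_pos (by norm_num) _) (hq' (N+m))) h1
    rw [le_div_iff₀ hD]
    set D : ℝ := ((deltaCard 2 (N+m) : ℕ) : ℝ) with hDdef
    have hDval : D = 2^(N+2) * 2^k - 1 := by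
      rw [hDdef, deltaCard_cast]
      congr 1
      rw [← pow_add]
      congr 1
      omega
    have hlogb_le : Real.log b ≤ (b:ℝ) := Real.log_le_self (by positivity)
    have hPb : (b:ℝ) ≤ (2:ℝ)^k := by
      have h1 : b < 2^b := Nat.lt_two_pow_self
      have h2 : (2:ℕ)^b ≤ 2^k := Nat.pow_le_pow_right (by norm_num) hkb
      exact_mod_cast le_of_lt (lt_of_lt_of_le h1 h2)
    have hfinal : Real.log b ≤ (2:ℝ)^k * Real.log 4 + ε := by
      have hP0 : (0:ℝ) ≤ (2:ℝ)^k := by positivity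
      nlinarith [mul_nonneg hP0 (by linarith : (0:ℝ) ≤ Real.log 4 - 1)]
    have heD : ε * D = Real.log 4 * 2^k - ε := by
      rw [hDval]
      linear_combination ((2:ℝ)^k) * hε2
    have hm2 : (2:ℝ)^m = 2 * 2^k := by rw [hm, pow_succ]; ring
    have hcD : c * D = Real.log b * D + ε * D := by rw [hc]; ring
    rw [hm2] at hlogS
    linarith [hlogS, hcD, heD, hfinal]
  -- conclude
  have hBdd : IsBoundedUnder (· ≤ ·) atTop
      (fun n => Real.log (∑ i, (treeP 2 M n i : ℝ)) / ((deltaCard 2 n : ℕ) : ℝ)) :=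
    isBoundedUnder_of ⟨2 * Real.log (((a+b)^2 : ℕ) : ℝ),
      fun n => f_upper_bound ha hab hlb M hM n⟩
  have hfreq : ∃ᶠ n in atTop,
      c ≤ Real.log (∑ i, (treeP 2 M n i : ℝ)) / ((deltaCard 2 n : ℕ) : ℝ) :=
    (eventually_atTop.mpr ⟨N + b + 1, hev⟩).frequently
  have hle := le_limsup_of_frequently_le hfreq hBdd
  rw [treeEntropy]
  exact lt_of_lt_of_le hcgt hle


/-- **Theorem 3.3.** Complete classification for `d = 2`, `b > a ≥ 1`, `0 < l ≤ b`,
`a + l > b`, in terms of the signs of `b² − 4al` and `b² − 2al − 2a²`. -/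
theorem treeEntropy_Mabl_classification_two {a b l : ℕ}
    (ha : 1 ≤ a) (hab : a < b) (hl : 0 < l) (hlb : l ≤ b) (hsum : b < a + l)
    (M : Matrix (Fin (a + b)) (Fin (a + b)) ℕ) (hM : IsMabl a b l M) :
    (b ^ 2 < 4 * a * l → treeEntropy 2 M > Real.log b) ∧
    (4 * a * l < b ^ 2 → b ^ 2 < 2 * a * l + 2 * a ^ 2 →
      treeEntropy 2 M > Real.log b) ∧
    (4 * a * l < b ^ 2 → 2 * a * l + 2 * a ^ 2 ≤ b ^ 2 →
      treeEntropy 2 M = Real.log b) ∧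
    (b ^ 2 = 4 * a * l → a ≤ l → treeEntropy 2 M = Real.log b) ∧
    (b ^ 2 = 4 * a * l → l < a → treeEntropy 2 M > Real.log b) := by
  have ha' : (0:ℝ) < a := by exact_mod_cast ha
  have hb' : (0:ℝ) < b := by exact_mod_cast (show 0 < b by omega)
  have hl' : (0:ℝ) < l := by exact_mod_cast hl
  have hsum' : (b:ℝ) < a + l := by exact_mod_cast hsum
  -- the strict case via vertex ≤ 1 (b² ≤ 2a² + 2al), using g(x) ≥ g(1) > 0
  have strict2 : (b:ℝ)^2 < 2*a*l + 2*(a:ℝ)^2 → Real.log b < treeEntropy 2 M := by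
    intro hkey
    set δ : ℝ := ((a:ℝ)+l)^2/(b:ℝ)^2 - 1 with hδdef
    have hδb : δ * (b:ℝ)^2 = ((a:ℝ)+l)^2 - (b:ℝ)^2 := by
      rw [hδdef]; field_simp
    have hδ : 0 < δ := by
      rw [hδdef, lt_sub_iff_add_lt, zero_add, lt_div_iff₀ (by positivity)]
      nlinarith
    apply entropy_gt ha hab hl hlb M hM δ hδ
    intro x hx
    rw [div_pow, le_div_iff₀ (by positivity)]
    have hin : (0:ℝ) ≤ (a:ℝ)^2*x + (a:ℝ)^2 + 2*a*l - (b:ℝ)^2 := by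
      have := mul_le_mul_of_nonneg_left hx (sq_nonneg (a:ℝ))
      nlinarith
    have hprod := mul_nonneg (sub_nonneg.mpr hx) hin
    nlinarith [hδb, hprod]
  refine ⟨?_, ?_, ?_, ?_, ?_⟩
  · -- (i) b² < 4al
    intro h
    have h' : (b:ℝ)^2 < 4*a*l := by exact_mod_cast h
    set δ : ℝ := (4*(a:ℝ)*l - (b:ℝ)^2)/(4*(a:ℝ)^2) with hδdef
    have hδ4 : δ * (4*(a:ℝ)^2) = 4*(a:ℝ)*l - (b:ℝ)^2 := by
      rw [hδdef]; field_simp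
    have hδ : 0 < δ := by
      rw [hδdef]; exact div_pos (by linarith) (by positivity)
    apply entropy_gt ha hab hl hlb M hM δ hδ
    intro x hx
    rw [div_pow, le_div_iff₀ (by positivity)]
    have h5 : δ*(4*(a:ℝ)^2)*(b:ℝ)^2 = (4*(a:ℝ)*l - (b:ℝ)^2)*(b:ℝ)^2 := by rw [hδ4]
    nlinarith [sq_nonneg (2*(a:ℝ)^2*x + 2*(a:ℝ)*l - (b:ℝ)^2), h5,
      (show (0:ℝ) < 4*(a:ℝ)^2 by positivity)]
  · -- (ii)
    intro _ h2
    exact strict2 (by exact_mod_cast h2)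
  · -- (iii)
    intro h1 h2
    have h1' : 4*(a:ℝ)*l < (b:ℝ)^2 := by exact_mod_cast h1
    have h2' : 2*(a:ℝ)*l + 2*(a:ℝ)^2 ≤ (b:ℝ)^2 := by exact_mod_cast h2
    set X : ℝ := ((b:ℝ)^2 - 2*a*l)/(2*(a:ℝ)^2) with hXdef
    have h2a : (0:ℝ) < 2*(a:ℝ)^2 := by positivity
    have hXval : X * (2*(a:ℝ)^2) = (b:ℝ)^2 - 2*a*l := by
      rw [hXdef]; field_simp
    apply entropy_of_bounded ha hab hl M hM X
    · rw [hXdef, le_div_iff₀ h2a]; linarith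
    · have h4 : (a:ℝ)*X + l = (b:ℝ)^2/(2*a) := by
        rw [hXdef]; field_simp; ring
      rw [h4, div_pow, div_le_iff₀ (by positivity)]
      have h5 : (b:ℝ)^2*(X * (2*(a:ℝ)^2)) = (b:ℝ)^2*((b:ℝ)^2 - 2*(a:ℝ)*l) := by rw [hXval]
      nlinarith [h5, mul_nonneg (sq_nonneg (b:ℝ)) (le_of_lt (sub_pos.mpr h1'))]
  · -- (iv)
    intro h1 h2
    have hb2 : (b:ℝ)^2 = 4*(a:ℝ)*l := by exact_mod_cast h1
    have h2' : (a:ℝ) ≤ l := by exact_mod_cast h2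
    apply entropy_of_bounded ha hab hl M hM ((l:ℝ)/a)
    · rw [le_div_iff₀ ha']; linarith
    · have h4 : (a:ℝ)*((l:ℝ)/a) = l := by field_simp
      have h5 : (b:ℝ)^2*((l:ℝ)/a) = 4*(l:ℝ)^2 := by
        rw [hb2]; field_simp
      rw [h4, h5]; nlinarith
  · -- (v)
    intro h1 h2
    have hb2 : (b:ℝ)^2 = 4*(a:ℝ)*l := by exact_mod_cast h1
    have h2' : (l:ℝ) < a := by exact_mod_cast h2
    exact strict2 (by nlinarith)
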